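/- arXiv:0910.3443 — 2 statements merged into one kernel-verified Lean document; each statement's English description precedes it below -/
import Mathlib

section
/- Let H be a real homogeneous trigonometric polynomial of degree 3 in (sin θ, cos θ), i.e. H(θ) = A·∏_{j=1}^{3} sin(θ − θⱼ) with A real and θⱼ ∈ ℂ (complex roots occurring in conjugate pairs so H is real-valued on ℝ). If θ ∈ ℝ is at distance at least α (0 < α ≤ π/2) in ℂ from every complex root θⱼ + πn (n ∈ ℤ), then |H(θ)| ≥ (α³/24)·‖H‖₂, where ‖H‖₂² = ∫₀^{2π} H(φ)² dφ. -/
set_option maxHeartbeats 1000000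

open Real


lemma abs_sin_sq (z : ℂ) :
    ‖Complex.sin z‖ ^ 2 = Real.sin z.re ^ 2 + Real.sinh z.im ^ 2 := by
  rw [← Complex.re_add_im z, Complex.sin_add, Complex.cos_mul_I, Complex.sin_mul_I]
  rw [Complex.sq_norm, Complex.normSq_apply]
  simp [Complex.cosh_ofReal_re, Complex.sinh_ofReal_re, Complex.sin_ofReal_re,
    Complex.cos_ofReal_re]
  ring_nf
  nlinarith [Real.sin_sq_add_cos_sq z.re, Real.cosh_sq' z.im, sq_nonneg (Real.sinh z.im)]

lemma keyfac {α : ℝ} (hα : 0 < α) (hαπ : α ≤ π / 2) (z : ℂ)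
    (hd : ∀ n : ℤ, α ≤ ‖z - (π : ℂ) * n‖) :
    4 * (π ^ 2 - 4) / π ^ 4 * α ^ 2 * Real.cosh z.im ^ 2
      ≤ ‖Complex.sin z‖ ^ 2 := by
  have hπ := Real.pi_pos
  set x := z.re with hx
  set y := z.im with hy
  set n : ℤ := round (x / π) with hn
  set r : ℝ := x - n * π with hr
  -- |r| ≤ π/2
  have hr2 : |r| ≤ π / 2 := by
    have h1 : |x / π - round (x / π)| ≤ 1 / 2 := abs_sub_round _
    have : r = (x / π - round (x / π)) * π := by field_simp [hr]; ring
    rw [this, abs_mul, abs_of_pos hπ]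
    nlinarith [h1]
  -- distance hypothesis for this n
  have hdn : α ^ 2 ≤ r ^ 2 + y ^ 2 := by
    have h := hd n
    have h2 : α ^ 2 ≤ ‖z - (π : ℂ) * n‖ ^ 2 := by
      nlinarith [norm_nonneg (z - (π : ℂ) * n)]
    rw [Complex.sq_norm, Complex.normSq_apply] at h2
    simp only [Complex.sub_re, Complex.sub_im, Complex.mul_re, Complex.mul_im,
      Complex.ofReal_re, Complex.ofReal_im, Complex.intCast_re, Complex.intCast_im] at h2
    calc α ^ 2 ≤ _ := h2
    _ = r ^ 2 + y ^ 2 := by rw [hr, hx, hy]; ring_nf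
  -- Jordan's inequality
  have hsin : 2 / π * |r| ≤ |Real.sin x| := by
    have := Real.mul_abs_le_abs_sin hr2
    rw [hr, Real.sin_sub_int_mul_pi] at this
    have habs : |((-1:ℝ)) ^ n| = 1 := by
      rcases Int.even_or_odd n with h | h
      · rw [h.neg_one_zpow, abs_one]
      · rw [h.neg_one_zpow, abs_neg, abs_one]
    rw [abs_mul, habs, one_mul] at this
    exact this
  have hsin2 : 4 * r ^ 2 ≤ π ^ 2 * Real.sin x ^ 2 := by
    have h3 := mul_self_le_mul_self (by positivity) hsin
    rw [abs_mul_abs_self] at h3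
    have h6 : (2 / π * |r|) * (2 / π * |r|) = 4 * r ^ 2 / π ^ 2 := by
      rw [mul_mul_mul_comm, abs_mul_abs_self]; ring
    rw [h6, div_le_iff₀ (by positivity : (0:ℝ) < π ^ 2)] at h3
    nlinarith [h3]
  -- y² ≤ sinh² y
  have hsinh : y ^ 2 ≤ Real.sinh y ^ 2 := by
    have h4 : |y| ≤ Real.sinh |y| := (Real.self_le_sinh_iff.2 (abs_nonneg y))
    have h5 : Real.sinh |y| = |Real.sinh y| := (Real.abs_sinh y).symm
    nlinarith [abs_nonneg y, sq_abs y, sq_abs (Real.sinh y)]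
  rw [abs_sin_sq, Real.cosh_sq']
  have hα2 : α ^ 2 ≤ π ^ 2 / 4 := by nlinarith
  have hπ4 : (0:ℝ) < π ^ 4 := by positivity
  have hP4 : (0:ℝ) ≤ π ^ 2 - 4 := by nlinarith [Real.pi_gt_three]
  have hS : (0:ℝ) ≤ Real.sinh y ^ 2 := sq_nonneg _
  rw [div_mul_eq_mul_div, div_mul_eq_mul_div, div_le_iff₀ hπ4, ← hx, ← hy]
  nlinarith [mul_nonneg (mul_nonneg hS hP4) (by nlinarith : (0:ℝ) ≤ π ^ 2 - 4 * α ^ 2),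
    mul_le_mul_of_nonneg_left hsin2 (le_of_lt (by positivity : (0:ℝ) < π ^ 2)),
    mul_le_mul_of_nonneg_left hdn (by positivity : (0:ℝ) ≤ 4 * π ^ 2),
    mul_le_mul_of_nonneg_left hsinh (by positivity : (0:ℝ) ≤ 4 * π ^ 2),
    sq_nonneg r, sq_nonneg y]

/-- Lemma on homogeneous trigonometric polynomials of degree 3: if
`H(θ) = A·∏ⱼ sin(θ−θⱼ)` (`A` real, `θⱼ ∈ ℂ`) is real-valued on `ℝ`, and the real
point `θ` is at distance at least `α` (`0 < α ≤ π/2`) in `ℂ` from every complex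
root `θⱼ + πn`, then `|H(θ)| ≥ (α³/24)·‖H‖₂` where `‖H‖₂² = ∫₀^{2π} H(φ)² dφ`. -/
theorem stmt4 (A α θ : ℝ) (t : Fin 3 → ℂ) (H : ℝ → ℝ)
    (hH : ∀ φ : ℝ, (H φ : ℂ) = (A : ℂ) * ∏ j : Fin 3, Complex.sin ((φ : ℂ) - t j))
    (hα : 0 < α) (hαπ : α ≤ π / 2)
    (hdist : ∀ j : Fin 3, ∀ n : ℤ, ‖(θ : ℂ) - t j - (π : ℂ) * n‖ ≥ α) :
    |H θ| ≥ (α ^ 3 / 24) * Real.sqrt (∫ φ in (0 : ℝ)..(2 * π), (H φ) ^ 2) := by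
  have hπ := Real.pi_pos
  set K : ℝ := 4 * (π ^ 2 - 4) / π ^ 4 with hK
  have hKb : (0.2401 : ℝ) ≤ K := by
    rw [hK, le_div_iff₀ (by positivity)]
    have h1 : (3.141592:ℝ)^2 ≤ π^2 := by nlinarith [Real.pi_gt_d6, Real.pi_pos]
    have h2 : π^2 ≤ (3.141593:ℝ)^2 := by nlinarith [Real.pi_lt_d6, Real.pi_pos]
    have h3 : π^4 ≤ ((3.141593:ℝ)^2)^2 := by nlinarith [sq_nonneg π, Real.pi_pos]
    nlinarith [h1, h3]
  have hKpos : (0:ℝ) < K := lt_of_lt_of_le (by norm_num) hKb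
  -- abbreviations
  set c : Fin 3 → ℝ := fun j => Real.cosh ((t j).im) with hc
  set a : Fin 3 → ℝ := fun j => ‖Complex.sin ((θ:ℂ) - t j)‖ with ha
  have hcpos : ∀ j, (0:ℝ) < c j := by intro j; simp only [hc]; exact Real.cosh_pos _
  -- per-factor lower bound at θ
  have hfac : ∀ j : Fin 3, K * α ^ 2 * c j ^ 2 ≤ a j ^ 2 := by
    intro j
    have h := keyfac hα hαπ ((θ:ℂ) - t j) (fun n => hdist j n)
    have him : ((θ:ℂ) - t j).im = -((t j).im) := by simp
    rwa [him, Real.cosh_neg] at h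
  -- |H φ| as a product
  have habsH : ∀ φ : ℝ, |H φ| = |A| * ∏ j : Fin 3, ‖Complex.sin ((φ:ℂ) - t j)‖ := by
    intro φ
    have h := congrArg (‖·‖) (hH φ)
    rwa [Complex.norm_real, Real.norm_eq_abs, norm_mul, Complex.norm_real, Real.norm_eq_abs, norm_prod] at h
  -- per-factor upper bound at any φ
  have hfacUB : ∀ φ : ℝ, ∀ j : Fin 3,
      ‖Complex.sin ((φ:ℂ) - t j)‖ ≤ c j := by
    intro φ j
    have h1 := abs_sin_sq ((φ:ℂ) - t j)
    have him : ((φ:ℂ) - t j).im = -((t j).im) := by simp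
    have hsq : ‖Complex.sin ((φ:ℂ) - t j)‖ ^ 2 ≤ c j ^ 2 := by
      rw [h1, him, Real.sinh_neg, hc]
      nlinarith [Real.sin_sq_add_cos_sq ((φ:ℂ) - t j).re, Real.cosh_sq' ((t j).im),
        sq_nonneg (Real.cos ((φ:ℂ) - t j).re)]
    nlinarith [norm_nonneg (Complex.sin ((φ:ℂ) - t j)), hcpos j]
  -- sup bound for H²
  have hHsq : ∀ φ : ℝ, H φ ^ 2 ≤ A ^ 2 * ((c 0)^2 * (c 1)^2 * (c 2)^2) := by
    intro φ
    have h2 : H φ ^ 2 = |H φ| ^ 2 := (sq_abs _).symm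
    rw [h2, habsH φ, Fin.prod_univ_three]
    have u0 := hfacUB φ 0; have u1 := hfacUB φ 1; have u2 := hfacUB φ 2
    have n0 := norm_nonneg (Complex.sin ((φ:ℂ) - t 0))
    have n1 := norm_nonneg (Complex.sin ((φ:ℂ) - t 1))
    have n2 := norm_nonneg (Complex.sin ((φ:ℂ) - t 2))
    have hc0 := (hcpos 0).le; have hc1 := (hcpos 1).le; have hc2 := (hcpos 2).le
    rw [mul_pow, sq_abs]
    have : (‖Complex.sin ((φ:ℂ) - t 0)‖ * ‖Complex.sin ((φ:ℂ) - t 1)‖ *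
        ‖Complex.sin ((φ:ℂ) - t 2)‖) ^ 2 ≤ (c 0)^2 * (c 1)^2 * (c 2)^2 := by
      have hm : ‖Complex.sin ((φ:ℂ) - t 0)‖ * ‖Complex.sin ((φ:ℂ) - t 1)‖ *
          ‖Complex.sin ((φ:ℂ) - t 2)‖ ≤ c 0 * c 1 * c 2 :=
        mul_le_mul (mul_le_mul u0 u1 n1 hc0) u2 n2 (by positivity)
      calc _ ≤ (c 0 * c 1 * c 2) ^ 2 := by
              apply pow_le_pow_left₀ (by positivity) hm
      _ = (c 0)^2 * (c 1)^2 * (c 2)^2 := by ring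
    nlinarith [sq_nonneg A, this]
  -- continuity and integrability
  have hHeq : H = fun φ : ℝ => ((A : ℂ) * ∏ j : Fin 3, Complex.sin ((φ : ℂ) - t j)).re := by
    funext φ; rw [← hH φ, Complex.ofReal_re]
  have hcont : Continuous H := by
    rw [hHeq]
    exact Complex.continuous_re.comp (continuous_const.mul (continuous_finset_prod _
      (fun j _ => Complex.continuous_sin.comp (Complex.continuous_ofReal.sub continuous_const))))
  have hint : IntervalIntegrable (fun φ => H φ ^ 2) MeasureTheory.volume 0 (2 * π) :=
    (hcont.pow 2).intervalIntegrable _ _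
  set I : ℝ := ∫ φ in (0:ℝ)..(2 * π), (H φ) ^ 2 with hI
  have hInn : 0 ≤ I := by
    rw [hI]
    exact intervalIntegral.integral_nonneg (by positivity) (fun x _ => sq_nonneg _)
  set M2 : ℝ := A ^ 2 * ((c 0)^2 * (c 1)^2 * (c 2)^2) with hM2
  have hM2nn : 0 ≤ M2 := by
    rw [hM2]; positivity
  have hIb : I ≤ 2 * π * M2 := by
    rw [hI, hM2]
    have h := intervalIntegral.integral_mono_on (by positivity : (0:ℝ) ≤ 2 * π) hint
      (intervalIntegrable_const (c := A ^ 2 * ((c 0)^2 * (c 1)^2 * (c 2)^2))) (fun x _ => hHsq x)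
    rwa [intervalIntegral.integral_const, smul_eq_mul, sub_zero] at h
  have habsHθ : |H θ| = |A| * (a 0 * a 1 * a 2) := by
    rw [habsH θ, Fin.prod_univ_three]
  clear_value K c a I M2
  -- lower bound for |H θ|²
  have hlow : K ^ 3 * α ^ 6 * M2 ≤ |H θ| ^ 2 := by
    rw [habsHθ]
    have e0 := hfac 0; have e1 := hfac 1; have e2 := hfac 2
    have h01 : (K * α ^ 2 * c 0 ^ 2) * (K * α ^ 2 * c 1 ^ 2) ≤ a 0 ^ 2 * a 1 ^ 2 :=
      mul_le_mul e0 e1 (by positivity) (sq_nonneg _)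
    have h012 : (K * α ^ 2 * c 0 ^ 2) * (K * α ^ 2 * c 1 ^ 2) * (K * α ^ 2 * c 2 ^ 2)
        ≤ a 0 ^ 2 * a 1 ^ 2 * a 2 ^ 2 :=
      mul_le_mul h01 e2 (by positivity) (mul_nonneg (sq_nonneg _) (sq_nonneg _))
    have hrw : (|A| * (a 0 * a 1 * a 2)) ^ 2 = A ^ 2 * (a 0 ^ 2 * a 1 ^ 2 * a 2 ^ 2) := by
      rw [mul_pow, sq_abs]; ring
    rw [hrw, hM2]
    nlinarith [mul_le_mul_of_nonneg_left h012 (sq_nonneg A)]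
  -- numeric inequality
  have hnum : 2 * π ≤ 576 * K ^ 3 := by
    have h6 : (0.2401:ℝ) ^ 3 ≤ K ^ 3 := pow_le_pow_left₀ (by norm_num) hKb 3
    nlinarith [Real.pi_lt_d6, h6]
  -- assemble
  have h2 : ((α ^ 3 / 24) * Real.sqrt I) ^ 2 ≤ |H θ| ^ 2 := by
    rw [mul_pow, Real.sq_sqrt hInn]
    calc (α ^ 3 / 24) ^ 2 * I ≤ (α ^ 3 / 24) ^ 2 * (2 * π * M2) :=
          mul_le_mul_of_nonneg_left hIb (by positivity)
    _ ≤ K ^ 3 * α ^ 6 * M2 := by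
          have hX : (0:ℝ) ≤ α ^ 6 * M2 := mul_nonneg (pow_nonneg hα.le 6) hM2nn
          have h5 := mul_le_mul_of_nonneg_right hnum hX
          ring_nf at h5 ⊢
          linarith [h5]
    _ ≤ |H θ| ^ 2 := hlow
  have h3 := Real.sqrt_le_sqrt h2
  rwa [Real.sqrt_sq (by positivity), Real.sqrt_sq (abs_nonneg _)] at h3
end

section
/- If two points p, q of the plane ℝ² lie in the disc of radius 1/δ around the origin (with 0 < δ < 1), neither equal to the origin, and their Euclidean distance is at least δ, then their distance in polar coordinates, measured as √((r_p − r_q)² + (θ_p − θ_q)²) with angles chosen so |θ_p − θ_q| ≤ π, is at least δ². -/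
open Real

/-- If two nonzero points of the plane lie in the disc of radius `1/δ` (`0 < δ < 1`)
and are at Euclidean distance at least `δ`, then in polar coordinates (with angle
representatives chosen so that `|θ_p − θ_q| ≤ π`) their distance
`√((r_p − r_q)² + (θ_p − θ_q)²)` is at least `δ²`. -/
theorem stmt13 (δ : ℝ) (hδ0 : 0 < δ) (hδ1 : δ < 1) (p q : ℂ)
    (hp : p ≠ 0) (hq : q ≠ 0)
    (hpd : ‖p‖ ≤ 1 / δ) (hqd : ‖q‖ ≤ 1 / δ)
    (hdist : ‖p - q‖ ≥ δ)
    (θp θq : ℝ)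
    (hθp : p = (‖p‖ : ℂ) * Complex.exp (θp * Complex.I))
    (hθq : q = (‖q‖ : ℂ) * Complex.exp (θq * Complex.I))
    (hθ : |θp - θq| ≤ π) :
    Real.sqrt ((‖p‖ - ‖q‖) ^ 2 + (θp - θq) ^ 2) ≥ δ ^ 2 := by
  set rp := ‖p‖ with hrp
  set rq := ‖q‖ with hrq
  have hrp0 : 0 ≤ rp := norm_nonneg p
  have hrq0 : 0 ≤ rq := norm_nonneg q
  -- compute |p - q|^2
  have hsq : ‖p - q‖ ^ 2
      = (rp - rq) ^ 2 + 2 * rp * rq * (1 - Real.cos (θp - θq)) := by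
    rw [← Complex.normSq_eq_norm_sq]
    rw [hθp, hθq]
    simp only [Complex.exp_mul_I]
    rw [Complex.normSq_apply]
    simp [Complex.cos_ofReal_re, Complex.sin_ofReal_re, Real.cos_sub]
    ring_nf
    nlinarith [Real.sin_sq_add_cos_sq θp, Real.sin_sq_add_cos_sq θq]
  -- 1 - cos t ≤ t^2 / 2
  have hcos : 1 - Real.cos (θp - θq) ≤ (θp - θq) ^ 2 / 2 := by
    have h1 := Real.sin_sq_le_sq (x := (θp - θq) / 2)
    have h2 : Real.cos (θp - θq) = 1 - 2 * Real.sin ((θp - θq) / 2) ^ 2 := by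
      have h := Real.cos_sq ((θp - θq) / 2)
      rw [show 2 * ((θp - θq) / 2) = θp - θq by ring] at h
      have := Real.sin_sq_add_cos_sq ((θp - θq) / 2)
      nlinarith
    nlinarith
  have hprod : rp * rq ≤ 1 / δ ^ 2 := by
    calc rp * rq ≤ (1 / δ) * (1 / δ) := by
          apply mul_le_mul hpd hqd hrq0 (by positivity)
      _ = 1 / δ ^ 2 := by field_simp
  have hδ2 : (0:ℝ) < δ ^ 2 := by positivity
  have hprod2 : δ ^ 2 * (rp * rq) ≤ 1 := by
    have := (le_div_iff₀ hδ2).mp hprod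
    linarith [this]
  have key : δ ^ 2 * δ ^ 2 ≤ (rp - rq) ^ 2 + (θp - θq) ^ 2 := by
    have h3 : δ ^ 2 ≤ ‖p - q‖ ^ 2 := by
      nlinarith [norm_nonneg (p - q)]
    have h4 : δ ^ 2 ≤ (rp - rq) ^ 2 + (rp * rq) * (θp - θq) ^ 2 := by
      nlinarith [sq_nonneg (θp - θq), mul_nonneg hrp0 hrq0]
    have h5 := mul_le_mul_of_nonneg_left h4 hδ2.le
    nlinarith [mul_nonneg (sub_nonneg.mpr hprod2) (sq_nonneg (θp - θq)),
      mul_nonneg (by nlinarith : (0:ℝ) ≤ 1 - δ ^ 2) (sq_nonneg (rp - rq)),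
      sq_nonneg (rp - rq), sq_nonneg (θp - θq)]
  calc δ ^ 2 = Real.sqrt (δ ^ 2 * δ ^ 2) := (Real.sqrt_mul_self (by positivity)).symm
    _ ≤ _ := Real.sqrt_le_sqrt key
end
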